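/- arXiv:2310.07148 — 3 statements merged into one kernel-verified Lean document; each statement's English description precedes it below -/
import Mathlib

section
/- Let n ≥ 1, let G be an additive commutative group, and let T₁, T₂, A₁, A₂, B : Fin n → G. Let π₁ and π₂ be permutations of Fin n, acting on an n-tuple X : Fin n → G by (π(X))_i = X_{π(i)}. Set T = T₁ + T₂ (pointwise), Δ = π₂(π₁(A₂) + A₁) − B, Z₂ = T₂ − A₂, and Z₁ = π₁(Z₂ + T₁) − A₁. Then B + (π₂(Z₁) + Δ) = π₂(π₁(T)); that is, the two output shares of the oblivious shuffle protocol reconstruct exactly the database T shuffled by the joint permutation π₂∘π₁. -/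
/-- Correctness of the oblivious shuffle protocol: the two output shares
`B` and `π₂(Z₁) + Δ` reconstruct the database `T = T₁ + T₂` shuffled by the
joint permutation `π₂ ∘ π₁`, where a permutation `π` acts on an `n`-tuple `X`
by `(π(X)) i = X (π i)`. -/
theorem oblivious_shuffle_correct (n : ℕ) (hn : 1 ≤ n) (G : Type*) [AddCommGroup G]
    (T₁ T₂ A₁ A₂ B T Δ Z₁ Z₂ : Fin n → G) (π₁ π₂ : Equiv.Perm (Fin n))
    (hT : T = T₁ + T₂)
    (hΔ : Δ = (fun i => ((fun j => A₂ (π₁ j)) + A₁) (π₂ i)) - B)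
    (hZ₂ : Z₂ = T₂ - A₂)
    (hZ₁ : Z₁ = (fun i => (Z₂ + T₁) (π₁ i)) - A₁) :
    B + ((fun i => Z₁ (π₂ i)) + Δ) = fun i => T (π₁ (π₂ i)) := by
  subst hT hΔ hZ₂ hZ₁
  funext i
  simp [Pi.add_apply, Pi.sub_apply]
  abel
end

section
/- Let a, b ∈ ℤ^m with preference bits p_i = (p_i[1], p_i[2]) ∈ {(0,0),(0,1),(1,0)} for each i ∈ {1,…,m}, and let B = {i : p_i[1] = 0} with preference 'min' on i if p_i[2] = 0 and 'max' on i if p_i[2] = 1. Define, for each i: α_i = 1 iff a[i] ≤ b[i]; α'_i = 1 iff b[i] ≤ a[i]; β_i = (¬p_i[2]) ∧ α_i; β'_i = p_i[2] ∧ α'_i; φ_i = β_i ⊕ β'_i; σ_i = φ_i ∨ p_i[1]; ω_i = (¬(α_i ∧ α'_i)) ∧ (¬p_i[1]); and set σ̂ = σ_1 ∧ ⋯ ∧ σ_m, ω̂ = ω_1 ∨ ⋯ ∨ ω_m, Φ = σ̂ ∧ ω̂. Then Φ = 1 if and only if a ≺_B b, i.e., the ObliDom evaluation correctly computes the user-defined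 dominance flag. -/
/-- `a` dominates `b` on the user-selected dimensions `B = {i : p_i[1] = 0}` as
per the user preferences (`p_i[2] = 0` means min is preferred, `p_i[2] = 1`
means max is preferred). -/
def Dominates (m : ℕ) (p1 p2 : Fin m → Bool) (a b : Fin m → ℤ) : Prop :=
  (∀ j, p1 j = false →
      ((p2 j = false → a j ≤ b j) ∧ (p2 j = true → b j ≤ a j))) ∧
    ∃ j, p1 j = false ∧ a j ≠ b j

/-- Correctness of `ObliDom`: the flag `Φ = σ̂ ∧ ω̂` equals `1` iff `a ≺_B b`,
the user-defined dominance on the selected dimensions `B = {i : p_i[1] = 0}`. -/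
theorem obliDom_correct (m : ℕ) (a b : Fin m → ℤ) (p1 p2 : Fin m → Bool)
    (hp : ∀ i, ¬ (p1 i = true ∧ p2 i = true))
    (α α' β β' φ σ ω : Fin m → Bool) (σhat ωhat Φ : Bool)
    (hα : ∀ i, α i = decide (a i ≤ b i)) (hα' : ∀ i, α' i = decide (b i ≤ a i))
    (hβ : ∀ i, β i = ((! p2 i) && α i)) (hβ' : ∀ i, β' i = (p2 i && α' i))
    (hφ : ∀ i, φ i = Bool.xor (β i) (β' i))
    (hσ : ∀ i, σ i = (φ i || p1 i))
    (hω : ∀ i, ω i = ((! (α i && α' i)) && (! p1 i)))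
    (hσhat : σhat = (List.finRange m).all fun i => σ i)
    (hωhat : ωhat = (List.finRange m).any fun i => ω i)
    (hΦ : Φ = (σhat && ωhat)) :
    Φ = true ↔ Dominates m p1 p2 a b := by
  have key : ∀ i, σ i = true ↔ (p1 i = false →
      ((p2 i = false → a i ≤ b i) ∧ (p2 i = true → b i ≤ a i))) := by
    intro i
    rw [hσ, hφ, hβ, hβ', hα, hα']
    cases h1 : p1 i <;> cases h2 : p2 i <;>
      simp [h1, h2] <;> constructor <;> intro h <;> omega
  have keyω : ∀ i, ω i = true ↔ (p1 i = false ∧ a i ≠ b i) := by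
    intro i
    rw [hω, hα, hα']
    cases h1 : p1 i <;> simp [h1] <;> omega
  rw [hΦ, Bool.and_eq_true, hσhat, hωhat]
  simp only [List.all_eq_true, List.any_eq_true, List.mem_finRange, true_implies, true_and]
  unfold Dominates
  constructor
  · rintro ⟨hs, i, hi⟩
    exact ⟨fun j => (key j).mp (hs j), i, (keyω i).mp hi⟩
  · rintro ⟨hs, i, hi⟩
    exact ⟨fun j => (key j).mpr (hs j), i, (keyω i).mpr hi⟩
end

section
/- Let C = (t_1, …, t_N) be a finite list of elements and ≺ an irreflexive and transitive binary relation on them. Then the block-nested-loop (BNL) algorithm, which processes the elements in order maintaining a window X (initialized to contain t_1; for each subsequent t_i, t_i is discarded if some x ∈ X satisfies x ≺ t_i, every x ∈ X with t_i ≺ x is removed from X, and t_i is inserted into X if it was not discarded), terminates with a window X whose set of elements equals the skyline Sky(C) = {p ∈ C : there is no p' ∈ C with p' ≺ p}. -/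
/-- One step of the block-nested-loop (BNL) algorithm: given the current window
`X` and the next tuple `t`, every `x ∈ X` with `t ≺ x` is removed, and `t` is
inserted unless some `x ∈ X` satisfies `x ≺ t` (in which case `t` is discarded). -/
def BNLstep {τ : Type*} (r : τ → τ → Prop) [DecidableRel r]
    (X : List τ) (t : τ) : List τ :=
  if X.any fun x => decide (r x t) then
    X.filter fun x => ! decide (r t x)
  else
    (X.filter fun x => ! decide (r t x)) ++ [t]

/-- The block-nested-loop (BNL) algorithm: the window is initialized to contain
the first tuple, and each subsequent tuple is processed by `BNLstep`. -/
def BNL {τ : Type*} (r : τ → τ → Prop) [DecidableRel r] : List τ → List τ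
  | [] => []
  | t :: rest => rest.foldl (BNLstep r) [t]

theorem finset_min {τ : Type*} (r : τ → τ → Prop)
    (hirr : ∀ a, ¬ r a a)
    (htrans : ∀ a b c, r a b → r b c → r a c) :
    ∀ s : Finset τ, s.Nonempty → ∃ a ∈ s, ∀ b ∈ s, ¬ r b a := by
  classical
  intro s
  induction s using Finset.strongInductionOn with
  | _ s ih =>
    rintro ⟨a, ha⟩
    by_cases h : ∃ b ∈ s, r b a
    · obtain ⟨b, hb, hba⟩ := h
      have htne : (s.filter fun x => r x a).Nonempty :=
        ⟨b, Finset.mem_filter.2 ⟨hb, hba⟩⟩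
      have hsub : (s.filter fun x => r x a) ⊂ s :=
        Finset.filter_ssubset.2 ⟨a, ha, hirr a⟩
      obtain ⟨c, hc, hmin⟩ := ih _ hsub htne
      have hcs := (Finset.mem_filter.1 hc).1
      have hca := (Finset.mem_filter.1 hc).2
      exact ⟨c, hcs, fun d hd hdc =>
        hmin d (Finset.mem_filter.2 ⟨hd, htrans d c a hdc hca⟩) hdc⟩
    · exact ⟨a, ha, fun b hb hba => h ⟨b, hb, hba⟩⟩

theorem list_min {τ : Type*} (r : τ → τ → Prop)
    (hirr : ∀ a, ¬ r a a)
    (htrans : ∀ a b c, r a b → r b c → r a c)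
    (S : List τ) (p : τ) (h : ∃ q ∈ S, r q p) :
    ∃ x ∈ S, r x p ∧ ∀ b ∈ S, ¬ r b x := by
  classical
  obtain ⟨q, hq, hqp⟩ := h
  obtain ⟨x, hx, hmin⟩ := finset_min r hirr htrans
      ((S.toFinset).filter fun y => r y p) ⟨q, by simp [hq, hqp]⟩
  simp only [Finset.mem_filter, List.mem_toFinset] at hx
  refine ⟨x, hx.1, hx.2, fun b hb hbx => ?_⟩
  exact hmin b (by simp [hb, htrans b x p hbx hx.2]) hbx


theorem bnl_step {τ : Type*} (r : τ → τ → Prop) [DecidableRel r]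
    (hirr : ∀ a, ¬ r a a) (htrans : ∀ a b c, r a b → r b c → r a c)
    (S X : List τ) (hX : ∀ x, x ∈ X ↔ x ∈ S ∧ ¬ ∃ p' ∈ S, r p' x) (t : τ) :
    ∀ y, y ∈ BNLstep r X t ↔ y ∈ S ++ [t] ∧ ¬ ∃ p' ∈ S ++ [t], r p' y := by
  intro y
  unfold BNLstep
  by_cases hd : ∃ x ∈ X, r x t
  · obtain ⟨x, hxX, hxt⟩ := hd
    have hxS : x ∈ S := ((hX x).1 hxX).1
    have hany : (X.any fun x => decide (r x t)) = true := by
      simp only [List.any_eq_true, decide_eq_true_eq]; exact ⟨x, hxX, hxt⟩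
    rw [if_pos hany]
    simp only [List.mem_filter, Bool.not_eq_true', decide_eq_false_iff_not,
      List.mem_append, List.mem_singleton]
    constructor
    · rintro ⟨hyX, hty⟩
      obtain ⟨hyS, hny⟩ := (hX y).1 hyX
      refine ⟨Or.inl hyS, ?_⟩
      rintro ⟨p', hp', hpy⟩
      rcases hp' with h | h
      · exact hny ⟨p', h, hpy⟩
      · exact hny ⟨x, hxS, htrans x t y hxt (h ▸ hpy)⟩
    · rintro ⟨hy, hny⟩
      rcases hy with hyS | rfl
      · have hyX : y ∈ X := (hX y).2 ⟨hyS, fun ⟨p', hp', hpy⟩ =>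
          hny ⟨p', Or.inl hp', hpy⟩⟩
        exact ⟨hyX, fun hty => hny ⟨t, Or.inr rfl, hty⟩⟩
      · exact absurd ⟨x, Or.inl hxS, hxt⟩ hny
  · have hany : (X.any fun x => decide (r x t)) = false := by
      rw [List.any_eq_false]
      exact fun x hx => fun h => hd ⟨x, hx, of_decide_eq_true h⟩
    rw [if_neg (by simp [hany])]
    simp only [List.mem_append, List.mem_filter, Bool.not_eq_true',
      decide_eq_false_iff_not, List.mem_singleton]
    constructor
    · rintro (⟨hyX, hty⟩ | rfl)
      · obtain ⟨hyS, hny⟩ := (hX y).1 hyX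
        refine ⟨Or.inl hyS, ?_⟩
        rintro ⟨p', hp', hpy⟩
        rcases hp' with h | h
        · exact hny ⟨p', h, hpy⟩
        · exact hty (h ▸ hpy)
      · refine ⟨Or.inr rfl, ?_⟩
        rintro ⟨p', hp', hpy⟩
        rcases hp' with h | h
        · obtain ⟨z, hzS, hzy, hzmin⟩ := list_min r hirr htrans S y ⟨p', h, hpy⟩
          exact hd ⟨z, (hX z).2 ⟨hzS, fun ⟨b, hb, hbz⟩ => hzmin b hb hbz⟩, hzy⟩
        · exact hirr y (h ▸ hpy)
    · rintro ⟨hy, hny⟩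
      rcases hy with hyS | rfl
      · by_cases hyt : y = t
        · exact Or.inr hyt
        · have hyX : y ∈ X := (hX y).2 ⟨hyS, fun ⟨p', hp', hpy⟩ =>
            hny ⟨p', Or.inl hp', hpy⟩⟩
          exact Or.inl ⟨hyX, fun hty => hny ⟨t, Or.inr rfl, hty⟩⟩
      · exact Or.inr rfl

theorem bnl_inv {τ : Type*} (r : τ → τ → Prop) [DecidableRel r]
    (hirr : ∀ a, ¬ r a a) (htrans : ∀ a b c, r a b → r b c → r a c) :
    ∀ (L S X : List τ),
      (∀ x, x ∈ X ↔ x ∈ S ∧ ¬ ∃ p' ∈ S, r p' x) →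
      ∀ x, x ∈ L.foldl (BNLstep r) X ↔ x ∈ S ++ L ∧ ¬ ∃ p' ∈ S ++ L, r p' x := by
  intro L
  induction L with
  | nil => intro S X hX x; simpa using hX x
  | cons t L ih =>
    intro S X hX x
    have := ih (S ++ [t]) (BNLstep r X t) (bnl_step r hirr htrans S X hX t) x
    simp only [List.foldl_cons]
    rw [this]
    simp [List.append_assoc]

/-- Correctness of the BNL algorithm: for an irreflexive and transitive
dominance relation `≺`, the final window's set of elements equals the skyline
`Sky(C) = {p ∈ C : ¬∃ p' ∈ C, p' ≺ p}`. -/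
theorem bnl_correct {τ : Type*} (r : τ → τ → Prop) [DecidableRel r]
    (hirr : ∀ a, ¬ r a a) (htrans : ∀ a b c, r a b → r b c → r a c)
    (C : List τ) (hC : C ≠ []) :
    ∀ x, x ∈ BNL r C ↔ (x ∈ C ∧ ¬ ∃ p' ∈ C, r p' x) := by
  obtain ⟨t, rest, rfl⟩ := List.exists_cons_of_ne_nil hC
  intro x
  have h0 : ∀ y, y ∈ [t] ↔ y ∈ [t] ∧ ¬ ∃ p' ∈ [t], r p' y := by
    intro y
    simp only [List.mem_singleton]
    constructor
    · rintro rfl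
      refine ⟨rfl, ?_⟩
      rintro ⟨p', hp', hp⟩
      exact hirr _ (hp' ▸ hp)
    · exact fun h => h.1
  have := bnl_inv r hirr htrans rest [t] [t] h0 x
  simpa [BNL] using this
end
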